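/- Every graph G on n vertices admits at most (Σ_{i=0}^{α(G)} binom(n, i))^{2n} orientations containing no directed triangle, where α(G) denotes the independence number of G. -/

import Mathlib

open MeasureTheory Filter

/-- An orientation of a simple graph: each edge gets exactly one direction. -/
structure GraphOrientation {V : Type*} (G : SimpleGraph V) where
  dir : V → V → Prop
  dir_adj : ∀ ⦃u v⦄, dir u v → G.Adj u v
  total : ∀ ⦃u v⦄, G.Adj u v → dir u v ∨ dir v u
  asymm : ∀ ⦃u v⦄, dir u v → ¬ dir v u

namespace GraphOrientation

variable {V : Type*} {G : SimpleGraph V}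

/-- There is a directed path of length `r` from `u` to `v` in `D` avoiding the set `X`
(this is the edge relation of the digraph `(D \ X)^r`). -/
def PathEdge (D : GraphOrientation G) (X : Set V) (r : ℕ) (u v : V) : Prop :=
  ∃ c : Fin (r + 1) → V, Function.Injective c ∧ (∀ i, c i ∉ X) ∧
    c 0 = u ∧ c (Fin.last r) = v ∧
    ∀ i : Fin r, D.dir (c i.castSucc) (c i.succ)

/-- `D` contains a directed cycle of length `k`. -/
def HasDirCycle (D : GraphOrientation G) (k : ℕ) : Prop :=
  ∃ c : Fin k → V, Function.Injective c ∧
    ∀ i : Fin k, D.dir (c i) (c ⟨((i : ℕ) + 1) % k, Nat.mod_lt _ i.pos⟩)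

/-- The number `e↔_{(D\X)^r}(A,B)` of edges between `A` and `B` (in either direction)
in the digraph `(D \ X)^r`. -/
noncomputable def eBoth (D : GraphOrientation G) (X : Set V) (r : ℕ) (A B : Set V) : ℕ :=
  {q : V × V | q.1 ∈ A ∧ q.2 ∈ B ∧ D.PathEdge X r q.1 q.2}.ncard +
  {q : V × V | q.1 ∈ A ∧ q.2 ∈ B ∧ D.PathEdge X r q.2 q.1}.ncard

/-- The degree `d↔_{(D\X)^r}(a,B) = d⁺(a,B) + d⁻(a,B)` in the digraph `(D \ X)^r`. -/
noncomputable def dBoth (D : GraphOrientation G) (X : Set V) (r : ℕ) (a : V) (B : Set V) : ℕ :=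
  {b ∈ B | D.PathEdge X r a b}.ncard + {b ∈ B | D.PathEdge X r b a}.ncard

/-- `D` is `r`-locally dense w.r.t. edge probability `p`, parameter `ℓ`, vertex set `W`
and size parameter `a` (playing the role of `α = 2⁶ log n / p`). -/
def LocallyDense (D : GraphOrientation G) (W : Set V) (p : ℝ) (ℓ r : ℕ) (a : ℝ) : Prop :=
  ∀ A' B X : Set V, A' ⊆ W → B ⊆ W → X ⊆ W →
    Disjoint A' B → Disjoint A' X → Disjoint B X →
    (A'.ncard : ℝ) = a → (r : ℝ) * a ≤ B.ncard → (B.ncard : ℝ) ≤ (ℓ : ℝ) * a →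
    (X.ncard : ℝ) ≤ ((ℓ : ℝ) + 1 - r) * a →
    (1 / 2) * p ^ (((ℓ : ℝ) - r + 1) / ℓ) * A'.ncard * B.ncard ≤ (D.eBoth X r A' B : ℝ)

/-- `D` extends the orientation `Hd` of a subgraph. -/
def Extends (D : GraphOrientation G) {H : SimpleGraph V} (Hd : GraphOrientation H) : Prop :=
  ∀ ⦃u v⦄, Hd.dir u v → D.dir u v

end GraphOrientation

/-- The quantity `α = 2⁶ (log n) / p`. -/
noncomputable def alphaP (n : ℕ) (p : ℝ) : ℝ := 2 ^ 6 * Real.log n / p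

/-- A Bernoulli-type measure on `Bool` with success probability `p`. -/
noncomputable def bern (p : ℝ) : Measure Bool :=
  ENNReal.ofReal p • Measure.dirac true + ENNReal.ofReal (1 - p) • Measure.dirac false

instance bern.instIsFiniteMeasure (p : ℝ) : IsFiniteMeasure (bern p) := by
  constructor
  rw [bern]
  simp only [Measure.add_apply, Measure.smul_apply, smul_eq_mul]
  refine ENNReal.add_lt_top.2 ⟨?_, ?_⟩ <;>
    exact ENNReal.mul_lt_top ENNReal.ofReal_lt_top (measure_lt_top _ _)

/-- The product measure on edge-indicators modelling `G(n,p)`. -/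
noncomputable def gnp (n : ℕ) (p : ℝ) : Measure (Sym2 (Fin n) → Bool) :=
  Measure.pi fun _ => bern p

/-- The graph on `Fin n` determined by the edge indicators `ω`. -/
def graphOf {n : ℕ} (ω : Sym2 (Fin n) → Bool) : SimpleGraph (Fin n) where
  Adj u v := u ≠ v ∧ ω s(u, v) = true
  symm := by
    constructor
    intro u v h
    exact ⟨h.1.symm, by rw [Sym2.eq_swap]; exact h.2⟩
  loopless := ⟨fun u h => h.1 rfl⟩

/-- The number of `C↻ₖ`-free orientations of a graph. -/
noncomputable def countCkFree {V : Type*} (k : ℕ) (G : SimpleGraph V) : ℕ :=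
  Nat.card {D : GraphOrientation G // ¬ D.HasDirCycle k}

section C3Aux

variable {V : Type*} {G : SimpleGraph V}

namespace C3Aux

lemma noC3 {D : GraphOrientation G} (hD : ¬ D.HasDirCycle 3)
    {a b c : V} (hab : D.dir a b) (hbc : D.dir b c) (hca : D.dir c a) : False := by
  apply hD
  refine ⟨![a, b, c], ?_, ?_⟩
  · have h1 : a ≠ b := (D.dir_adj hab).ne
    have h2 : b ≠ c := (D.dir_adj hbc).ne
    have h3 : c ≠ a := (D.dir_adj hca).ne
    intro i j hij
    fin_cases i <;> fin_cases j <;> simp_all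
  · intro i
    fin_cases i <;> simpa

lemma not_dir_self (D : GraphOrientation G) (a : V) : ¬ D.dir a a :=
  fun h => (G.loopless.irrefl a) (D.dir_adj h)

variable [LinearOrder V]

variable (D : GraphOrientation G)

/-- one step inside the digraph induced on earlier neighbours of `v`. -/
def st (v a b : V) : Prop :=
  D.dir a b ∧ G.Adj v a ∧ G.Adj v b ∧ a < v ∧ b < v

/-- reachability inside the digraph induced on earlier neighbours of `v`. -/
def rch (v : V) : V → V → Prop := Relation.ReflTransGen (st D v)

/-- earlier out-neighbours of `v`. -/
def Out (v : V) : Set V := {u | G.Adj v u ∧ u < v ∧ D.dir v u}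

def IsMax (v u : V) : Prop :=
  u ∈ Out D v ∧ ∀ w ∈ Out D v, rch D v w u → rch D v u w

/-- the canonical independent set coding the earlier out-neighbourhood of `v`. -/
def code (v : V) : Set V :=
  {u | IsMax D v u ∧ ∀ w, IsMax D v w → rch D v u w → rch D v w u → u ≤ w}

variable {D}

lemma rch_trans {v a b c : V} (h1 : rch D v a b) (h2 : rch D v b c) : rch D v a c :=
  Relation.ReflTransGen.trans h1 h2

lemma out_closed_step (hD : ¬ D.HasDirCycle 3) {v u w : V}
    (hu : u ∈ Out D v) (hs : st D v u w) : w ∈ Out D v := by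
  obtain ⟨hadj, hlt, hdir⟩ := hu
  obtain ⟨hduw, _, hadjw, _, hltw⟩ := hs
  rcases D.total hadjw with h | h
  · exact ⟨hadjw, hltw, h⟩
  · exact (noC3 hD hdir hduw h).elim

lemma out_closed (hD : ¬ D.HasDirCycle 3) {v u w : V}
    (hu : u ∈ Out D v) (hr : rch D v u w) : w ∈ Out D v := by
  induction hr with
  | refl => exact hu
  | tail _ hs ih => exact out_closed_step hD ih hs

lemma code_subset_out {v u : V} (h : u ∈ code D v) : u ∈ Out D v := h.1.1

lemma exists_max [Fintype V] {v u : V} (hu : u ∈ Out D v) :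
    ∃ r, IsMax D v r ∧ rch D v r u := by
  classical
  set g : V → ℕ := fun w => {x | rch D v w x}.ncard with hg
  set A : Finset V := Finset.univ.filter (fun w => w ∈ Out D v ∧ rch D v w u) with hA
  have huA : u ∈ A := by
    simp only [hA, Finset.mem_filter, Finset.mem_univ, true_and]
    exact ⟨hu, Relation.ReflTransGen.refl⟩
  obtain ⟨r, hrA, hmax⟩ := A.exists_max_image g ⟨u, huA⟩
  simp only [hA, Finset.mem_filter, Finset.mem_univ, true_and] at hrA
  obtain ⟨hrOut, hru⟩ := hrA
  refine ⟨r, ⟨hrOut, ?_⟩, hru⟩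
  intro w hwOut hwr
  have hwA : w ∈ A := by
    simp only [hA, Finset.mem_filter, Finset.mem_univ, true_and]
    exact ⟨hwOut, rch_trans hwr hru⟩
  have hsub : {x | rch D v r x} ⊆ {x | rch D v w x} :=
    fun x hx => rch_trans hwr hx
  have heq : {x | rch D v r x} = {x | rch D v w x} :=
    Set.eq_of_subset_of_ncard_le hsub (hmax w hwA) (Set.toFinite _)
  have : w ∈ {x | rch D v r x} := heq ▸ (Relation.ReflTransGen.refl : rch D v w w)
  exact this

lemma exists_code_rep [Fintype V] {v u : V} (hu : u ∈ Out D v) :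
    ∃ r ∈ code D v, rch D v r u := by
  classical
  obtain ⟨m, hm, hmu⟩ := exists_max hu
  set C : Finset V := Finset.univ.filter
    (fun w => IsMax D v w ∧ rch D v w m ∧ rch D v m w) with hC
  have hmC : m ∈ C := by
    simp only [hC, Finset.mem_filter, Finset.mem_univ, true_and]
    exact ⟨hm, Relation.ReflTransGen.refl, Relation.ReflTransGen.refl⟩
  have hne : C.Nonempty := ⟨m, hmC⟩
  set r := C.min' hne with hr
  have hrC := C.min'_mem hne
  simp only [hC, Finset.mem_filter, Finset.mem_univ, true_and] at hrC
  obtain ⟨hrMax, hrm, hmr⟩ := hrC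
  refine ⟨r, ⟨hrMax, ?_⟩, rch_trans hrm hmu⟩
  intro w hw hrw hwr
  have hwC : w ∈ C := by
    simp only [hC, Finset.mem_filter, Finset.mem_univ, true_and]
    exact ⟨hw, rch_trans hwr hrm, rch_trans hmr hrw⟩
  exact C.min'_le w hwC

lemma out_eq_code [Fintype V] (hD : ¬ D.HasDirCycle 3) (v : V) :
    Out D v = {u | ∃ r ∈ code D v, rch D v r u} := by
  ext u
  constructor
  · exact fun hu => exists_code_rep hu
  · rintro ⟨r, hr, hru⟩
    exact out_closed hD (code_subset_out hr) hru

lemma code_indep {v u w : V} (hu : u ∈ code D v) (hw : w ∈ code D v)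
    (hne : u ≠ w) : ¬ G.Adj u w := by
  intro hadj
  have hadju : G.Adj v u := hu.1.1.1
  have hltu : u < v := hu.1.1.2.1
  have hadjw : G.Adj v w := hw.1.1.1
  have hltw : w < v := hw.1.1.2.1
  rcases D.total hadj with h | h
  · have hst : st D v u w := ⟨h, hadju, hadjw, hltu, hltw⟩
    have huw : rch D v u w := Relation.ReflTransGen.single hst
    have hwu : rch D v w u := hw.1.2 u hu.1.1 huw
    exact hne (le_antisymm (hu.2 w hw.1 huw hwu) (hw.2 u hu.1 hwu huw))
  · have hst : st D v w u := ⟨h, hadjw, hadju, hltw, hltu⟩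
    have hwu : rch D v w u := Relation.ReflTransGen.single hst
    have huw : rch D v u w := hu.1.2 w hw.1.1 hwu
    exact hne (le_antisymm (hu.2 w hw.1 huw hwu) (hw.2 u hu.1 hwu huw))

lemma dir_eq_of_code_eq [Fintype V] {D1 D2 : GraphOrientation G}
    (h1 : ¬ D1.HasDirCycle 3) (h2 : ¬ D2.HasDirCycle 3)
    (hc : ∀ v, code D1 v = code D2 v) : ∀ a b : V, D1.dir a b ↔ D2.dir a b := by
  have wf : WellFounded ((· < ·) : V → V → Prop) :=
    (Finite.to_wellFoundedLT (α := V)).wf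
  have main : ∀ v : V, ∀ u, u < v →
      ((D1.dir v u ↔ D2.dir v u) ∧ (D1.dir u v ↔ D2.dir u v)) := by
    intro v
    induction v using wf.induction with
    | _ v ih =>
      have agree : ∀ a b : V, a < v → b < v → (D1.dir a b ↔ D2.dir a b) := by
        intro a b ha hb
        rcases lt_trichotomy a b with h | h | h
        · exact (ih b hb a h).2
        · subst h
          exact iff_of_false (not_dir_self D1 a) (not_dir_self D2 a)
        · exact (ih a ha b h).1
      have hst : ∀ a b : V, st D1 v a b ↔ st D2 v a b := by
        intro a b
        constructor
        · rintro ⟨hd, ha, hb, hla, hlb⟩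
          exact ⟨(agree a b hla hlb).mp hd, ha, hb, hla, hlb⟩
        · rintro ⟨hd, ha, hb, hla, hlb⟩
          exact ⟨(agree a b hla hlb).mpr hd, ha, hb, hla, hlb⟩
      have hrch : ∀ a b : V, rch D1 v a b ↔ rch D2 v a b := by
        intro a b
        exact ⟨fun h' => Relation.ReflTransGen.mono (fun x y h => (hst x y).mp h) a b h',
          fun h' => Relation.ReflTransGen.mono (fun x y h => (hst x y).mpr h) a b h'⟩
      have hOut : Out D1 v = Out D2 v := by
        rw [out_eq_code h1 v, out_eq_code h2 v]
        ext u
        simp only [Set.mem_setOf_eq, hc v]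
        constructor
        · rintro ⟨r, hr, hru⟩; exact ⟨r, hr, (hrch r u).mp hru⟩
        · rintro ⟨r, hr, hru⟩; exact ⟨r, hr, (hrch r u).mpr hru⟩
      intro u hu
      by_cases hadj : G.Adj v u
      · have e1 : D1.dir v u ↔ u ∈ Out D1 v :=
          ⟨fun h => ⟨hadj, hu, h⟩, fun h => h.2.2⟩
        have e2 : D2.dir v u ↔ u ∈ Out D2 v :=
          ⟨fun h => ⟨hadj, hu, h⟩, fun h => h.2.2⟩
        have hvu : D1.dir v u ↔ D2.dir v u := by rw [e1, e2, hOut]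
        constructor
        · exact hvu
        · have r1 : D1.dir u v ↔ ¬ D1.dir v u :=
            ⟨fun h h' => D1.asymm h' h, fun h => (D1.total hadj).resolve_left h⟩
          have r2 : D2.dir u v ↔ ¬ D2.dir v u :=
            ⟨fun h h' => D2.asymm h' h, fun h => (D2.total hadj).resolve_left h⟩
          rw [r1, r2, hvu]
      · constructor
        · exact iff_of_false (fun h => hadj (D1.dir_adj h)) (fun h => hadj (D2.dir_adj h))
        · exact iff_of_false (fun h => hadj (G.adj_symm (D1.dir_adj h)))
            (fun h => hadj (G.adj_symm (D2.dir_adj h)))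
  intro a b
  rcases lt_trichotomy a b with h | h | h
  · exact (main b a h).2
  · subst h
    exact iff_of_false (not_dir_self D1 a) (not_dir_self D2 a)
  · exact (main a b h).1

omit [LinearOrder V] in
lemma orientation_ext {D1 D2 : GraphOrientation G}
    (h : ∀ a b : V, D1.dir a b ↔ D2.dir a b) : D1 = D2 := by
  cases D1; cases D2
  simp only [GraphOrientation.mk.injEq]
  funext a b
  exact propext (h a b)

end C3Aux

end C3Aux

/-- inequality (2.1). Every graph `G` on `n` vertices has at most
`(∑_{i ≤ α(G)} C(n,i))^{2n}` orientations with no directed triangle, where `α(G)` is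
the independence number. -/
theorem count_triangle_free_orientations_indep
    {V : Type*} [Fintype V] (n : ℕ) (hn : Fintype.card V = n) (G : SimpleGraph V) :
    Nat.card {D : GraphOrientation G // ¬ D.HasDirCycle 3} ≤
      (∑ i ∈ Finset.range
          (sSup {k : ℕ | ∃ s : Finset V,
            (∀ u ∈ s, ∀ v ∈ s, ¬ G.Adj u v) ∧ s.card = k} + 1),
        n.choose i) ^ (2 * n) := by
  classical
  letI : LinearOrder V := LinearOrder.lift' (Fintype.equivFin V) (Fintype.equivFin V).injective
  set K := {k : ℕ | ∃ s : Finset V, (∀ u ∈ s, ∀ v ∈ s, ¬ G.Adj u v) ∧ s.card = k} with hK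
  set a := sSup K with ha
  set S := ∑ i ∈ Finset.range (a + 1), n.choose i with hSdef
  have hbdd : BddAbove K := by
    refine ⟨Fintype.card V, ?_⟩
    rintro k ⟨s, _, rfl⟩
    exact Finset.card_le_univ s
  have hcode : ∀ (D : GraphOrientation G),
      ∀ v : V, ((Set.toFinite (C3Aux.code D v)).toFinset).card ≤ a := by
    intro D v
    apply le_csSup hbdd
    refine ⟨(Set.toFinite (C3Aux.code D v)).toFinset, ?_, rfl⟩
    intro x hx y hy
    rw [Set.Finite.mem_toFinset] at hx hy
    by_cases hxy : x = y
    · subst hxy; exact G.loopless.irrefl x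
    · exact C3Aux.code_indep hx hy hxy
  let T := {s : Finset V // s.card ≤ a}
  let Φ : {D : GraphOrientation G // ¬ D.HasDirCycle 3} → (V → T) :=
    fun D v => ⟨(Set.toFinite (C3Aux.code D.1 v)).toFinset, hcode D.1 v⟩
  have hΦ : Function.Injective Φ := by
    rintro ⟨D1, h1⟩ ⟨D2, h2⟩ h
    apply Subtype.ext
    apply C3Aux.orientation_ext
    apply C3Aux.dir_eq_of_code_eq h1 h2
    intro v
    have hv := congrArg Subtype.val (congrFun h v)
    exact Set.Finite.toFinset_inj.mp hv
  have step1 : Nat.card {D : GraphOrientation G // ¬ D.HasDirCycle 3} ≤ Nat.card (V → T) :=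
    Nat.card_le_card_of_injective Φ hΦ
  have step2 : Nat.card (V → T) = Nat.card T ^ n := by
    rw [Nat.card_fun, Nat.card_eq_fintype_card (α := V), hn]
  have step3 : Nat.card T ≤ S := by
    rw [Nat.card_eq_fintype_card, Fintype.card_subtype]
    calc (Finset.univ.filter fun s : Finset V => s.card ≤ a).card
        ≤ ((Finset.range (a + 1)).biUnion fun i =>
            (Finset.univ : Finset V).powersetCard i).card := by
          apply Finset.card_le_card
          intro s hs
          simp only [Finset.mem_filter] at hs
          exact Finset.mem_biUnion.2 ⟨s.card, Finset.mem_range.2 (Nat.lt_succ_of_le hs.2),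
            Finset.mem_powersetCard.2 ⟨Finset.subset_univ s, rfl⟩⟩
      _ ≤ ∑ i ∈ Finset.range (a + 1), ((Finset.univ : Finset V).powersetCard i).card :=
          Finset.card_biUnion_le
      _ = S := by
          apply Finset.sum_congr rfl
          intro i _
          rw [Finset.card_powersetCard, Finset.card_univ, hn]
  have hS1 : 1 ≤ S := by
    have h0 : (0 : ℕ) ∈ Finset.range (a + 1) := Finset.mem_range.2 (Nat.succ_pos a)
    calc 1 = n.choose 0 := (Nat.choose_zero_right n).symm
      _ ≤ S := Finset.single_le_sum (fun i _ => Nat.zero_le _) h0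
  calc Nat.card {D : GraphOrientation G // ¬ D.HasDirCycle 3}
      ≤ Nat.card T ^ n := step2 ▸ step1
    _ ≤ S ^ n := Nat.pow_le_pow_left step3 n
    _ ≤ S ^ (2 * n) := Nat.pow_le_pow_right hS1 (by omega)
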